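/- Let q and w be coprime positive integers and let n, a be integers. Let q̄ be any integer with q·q̄ ≡ 1 (mod w). Then S(n, q·a; q·w) = S(0, n; q) · S(n·q̄, a; w). (Here S(0, n; q) = ∑_{h mod q, gcd(h,q)=1} e(n·h̄/q) is a Ramanujan sum.) -/

import Mathlib

/-- `e(x) = exp(2πi x)`. -/
noncomputable def e (x : ℝ) : ℂ := Complex.exp (2 * Real.pi * Complex.I * x)

lemma e_add (x y : ℝ) : e (x + y) = e x * e y := by
  simp [e, mul_add, Complex.exp_add]

lemma e_int (k : ℤ) : e k = 1 := by
  simp only [e]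
  rw [show (2 : ℂ) * (Real.pi:ℂ) * Complex.I * ((k:ℝ):ℂ) = k * (2 * Real.pi * Complex.I) by push_cast; ring]
  exact Complex.exp_int_mul_two_pi_mul_I k

lemma e_mod (c : ℕ) (hc : 0 < c) (j k : ℤ) (h : (j : ZMod c) = (k : ZMod c)) :
    e (j / c) = e (k / c) := by
  rw [ZMod.intCast_eq_intCast_iff] at h
  obtain ⟨t, ht⟩ := (Int.modEq_iff_dvd.mp h)
  have hj : j = k + c * (-t) := by linarith
  have hc' : (c : ℝ) ≠ 0 := by positivity
  have : (j : ℝ) / c = (k : ℝ) / c + (-t : ℝ) := by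
    rw [hj]; push_cast; field_simp
  rw [this, show (-(t:ℝ)) = ((-t : ℤ) : ℝ) by push_cast; ring, e_add, e_int, mul_one]

/-- The Kloosterman sum `S(m, n; c) = ∑_{h mod c, (h,c)=1} e((m h + n h̄)/c)`,
where `h̄` is the inverse of `h` modulo `c`. -/
noncomputable def S (m n : ℤ) (c : ℕ) : ℂ :=
  ∑ h ∈ (Finset.range c).filter fun h => Nat.Coprime h c,
    e (((m * (h : ℤ) + n * ((((h : ZMod c)⁻¹).val : ℤ)) : ℤ) : ℝ) / (c : ℝ))

lemma S_eq_units (m n : ℤ) (c : ℕ) [NeZero c] :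
    S m n c = ∑ u : (ZMod c)ˣ,
      e (((m * (((u : ZMod c)).val : ℤ) + n * ((((u⁻¹ : (ZMod c)ˣ) : ZMod c)).val : ℤ) : ℤ) : ℝ)
        / (c : ℝ)) := by
  rw [S]
  refine Finset.sum_bij' (i := fun h hh => ZMod.unitOfCoprime h
      (Finset.mem_filter.mp hh).2)
    (j := fun u _ => (u : ZMod c).val) ?_ ?_ ?_ ?_ ?_
  · intro a ha; exact Finset.mem_univ _
  · intro u _
    exact Finset.mem_filter.mpr ⟨Finset.mem_range.mpr (ZMod.val_lt _),
      ZMod.val_coe_unit_coprime u⟩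
  · intro a ha
    have := Finset.mem_filter.mp ha
    simp [ZMod.coe_unitOfCoprime, ZMod.val_cast_of_lt (Finset.mem_range.mp this.1)]
  · intro u _
    apply Units.ext
    simp [ZMod.coe_unitOfCoprime, ZMod.natCast_val, ZMod.cast_id]
  · intro a ha
    have h2 := (Finset.mem_filter.mp ha).2
    have h1 := Finset.mem_range.mp (Finset.mem_filter.mp ha).1
    have hval : ((ZMod.unitOfCoprime a h2 : (ZMod c)ˣ) : ZMod c).val = a := by
      simp [ZMod.coe_unitOfCoprime, ZMod.val_cast_of_lt h1]
    have hinv : ((a : ZMod c)⁻¹ : ZMod c) =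
        (((ZMod.unitOfCoprime a h2)⁻¹ : (ZMod c)ˣ) : ZMod c) := by
      rw [← ZMod.inv_coe_unit]
      simp [ZMod.coe_unitOfCoprime]
    rw [hval, hinv]

lemma e_split (q w : ℕ) (hq : 0 < q) (hw : 0 < w) (hqw : Nat.Coprime q w)
    (wbar qbar : ℤ) (h1 : (w : ℤ) * wbar ≡ 1 [ZMOD (q : ℤ)])
    (h2 : (q : ℤ) * qbar ≡ 1 [ZMOD (w : ℤ)]) (k : ℤ) :
    e ((k : ℝ) / ((q * w : ℕ) : ℝ)) = e (((k * wbar : ℤ) : ℝ) / q) * e (((k * qbar : ℤ) : ℝ) / w) := by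
  have hdvd : ((q : ℤ) * w) ∣ (w * wbar + q * qbar - 1) := by
    have hco : IsCoprime (q : ℤ) (w : ℤ) := by
      rw [Int.isCoprime_iff_gcd_eq_one]; exact_mod_cast hqw
    refine hco.mul_dvd ?_ ?_
    · have : (w : ℤ) * wbar - 1 ≡ 0 [ZMOD (q:ℤ)] := by
        simpa using h1.sub (Int.ModEq.refl 1)
      have hq' : (q:ℤ) ∣ (w * wbar - 1) := by
        exact_mod_cast (Int.modEq_zero_iff_dvd).mp this
      have : (q:ℤ) ∣ (q * qbar) := Dvd.intro _ rfl
      have := dvd_add hq' this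
      simpa [sub_add_eq_add_sub] using this
    · have : (q : ℤ) * qbar - 1 ≡ 0 [ZMOD (w:ℤ)] := by
        simpa using h2.sub (Int.ModEq.refl 1)
      have hw' : (w:ℤ) ∣ (q * qbar - 1) := by
        exact_mod_cast (Int.modEq_zero_iff_dvd).mp this
      have : (w:ℤ) ∣ (w * wbar) := Dvd.intro _ rfl
      have := dvd_add this hw'
      simpa [add_sub_assoc] using this
  obtain ⟨t, ht⟩ := hdvd
  have hq' : (q : ℝ) ≠ 0 := by positivity
  have hw' : (w : ℝ) ≠ 0 := by positivity
  have key : ((k * wbar : ℤ) : ℝ) / q + ((k * qbar : ℤ) : ℝ) / w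
      = (k : ℝ) / ((q * w : ℕ) : ℝ) + ((k * t : ℤ) : ℝ) := by
    have hwq : (w : ℤ) * wbar + q * qbar = 1 + q * w * t := by linarith
    -- push_cast
    push_cast
    field_simp
    -- push_cast
    have hR : (w:ℝ) * wbar + (q:ℝ) * qbar = 1 + (q:ℝ) * w * t := by
      exact_mod_cast congrArg (fun z : ℤ => (z : ℝ)) hwq
    linear_combination (k:ℝ) * hR
  rw [← e_add] at *
  rw [key, e_add, e_int, mul_one]

/-- For coprime `q, w`: `S(n, q a; q w) = S(0, n; q) ⬝ S(n q̄, a; w)`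
where `q q̄ ≡ 1 (mod w)`. The factor `S(0, n; q)` is a Ramanujan sum. -/
theorem kloosterman_ramanujan_split
    (q w : ℕ) (hqpos : 0 < q) (hwpos : 0 < w) (hqw : Nat.Coprime q w)
    (n a : ℤ) (qbar : ℤ) (hqbar : (q : ℤ) * qbar ≡ 1 [ZMOD (w : ℤ)]) :
    S n ((q : ℤ) * a) (q * w) = S 0 n q * S (n * qbar) a w := by
  haveI : NeZero q := ⟨hqpos.ne'⟩
  haveI : NeZero w := ⟨hwpos.ne'⟩
  haveI : NeZero (q * w) := ⟨by positivity⟩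
  set c := q * w with hc
  let ρ₁ : ZMod c →+* ZMod q := ZMod.castHom (Dvd.intro w rfl) (ZMod q)
  let ρ₂ : ZMod c →+* ZMod w := ZMod.castHom (Dvd.intro_left q rfl) (ZMod w)
  let π₁ : (ZMod c)ˣ →* (ZMod q)ˣ := Units.map ρ₁.toMonoidHom
  let π₂ : (ZMod c)ˣ →* (ZMod w)ˣ := Units.map ρ₂.toMonoidHom
  let wq : (ZMod q)ˣ := ZMod.unitOfCoprime w hqw.symm
  let f : (ZMod c)ˣ → (ZMod q)ˣ × (ZMod w)ˣ := fun u => (wq * (π₁ u)⁻¹, π₂ u)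
  have hval1 : ∀ x : ZMod c, (((x.val : ℤ)) : ZMod q) = ρ₁ x := by
    intro x; push_cast
    rw [ZMod.natCast_val, ZMod.castHom_apply]
  have hval2 : ∀ x : ZMod c, (((x.val : ℤ)) : ZMod w) = ρ₂ x := by
    intro x; push_cast
    rw [ZMod.natCast_val, ZMod.castHom_apply]
  have hinj : Function.Injective f := by
    intro u u' huu
    have h1 : π₁ u = π₁ u' := by
      have := congrArg Prod.fst huu
      simpa [f] using inv_injective (mul_left_cancel this)
    have h2 : π₂ u = π₂ u' := congrArg Prod.snd huu
    have e1 : ρ₁ (u : ZMod c) = ρ₁ (u' : ZMod c) := congrArg Units.val h1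
    have e2 : ρ₂ (u : ZMod c) = ρ₂ (u' : ZMod c) := congrArg Units.val h2
    rw [← hval1, ← hval1] at e1
    rw [← hval2, ← hval2] at e2
    have m1 : (u : ZMod c).val ≡ (u' : ZMod c).val [MOD q] := by
      rw [← ZMod.natCast_eq_natCast_iff]; exact_mod_cast e1
    have m2 : (u : ZMod c).val ≡ (u' : ZMod c).val [MOD w] := by
      rw [← ZMod.natCast_eq_natCast_iff]; exact_mod_cast e2
    have : (u : ZMod c).val ≡ (u' : ZMod c).val [MOD c] :=
      (Nat.modEq_and_modEq_iff_modEq_mul hqw).mp ⟨m1, m2⟩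
    apply Units.ext
    have := (ZMod.natCast_eq_natCast_iff _ _ _).mpr this
    rwa [ZMod.natCast_val, ZMod.natCast_val, ZMod.cast_id, ZMod.cast_id] at this
  have hfbij : Function.Bijective f := by
    rw [Fintype.bijective_iff_injective_and_card]
    refine ⟨hinj, ?_⟩
    rw [Fintype.card_prod, ZMod.card_units_eq_totient, ZMod.card_units_eq_totient,
      ZMod.card_units_eq_totient, hc, Nat.totient_mul hqw]
  -- wbar
  set wbar : ℤ := (((wq⁻¹ : (ZMod q)ˣ) : ZMod q).val : ℤ) with hwbardef
  have hwbar : (w : ℤ) * wbar ≡ 1 [ZMOD (q : ℤ)] := by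
    rw [← ZMod.intCast_eq_intCast_iff]
    push_cast [hwbardef]
    rw [ZMod.natCast_val, ZMod.cast_id]
    have : ((w : ℕ) : ZMod q) = (wq : ZMod q) := (ZMod.coe_unitOfCoprime _ _).symm
    rw [this, ← Units.val_mul, mul_inv_cancel, Units.val_one]
  rw [S_eq_units, S_eq_units, S_eq_units, Finset.sum_mul_sum, ← Fintype.sum_prod_type']
  refine Fintype.sum_bijective f hfbij _ _ ?_
  intro u
  rw [e_split q w hqpos hwpos hqw wbar qbar hwbar hqbar]
  congr 1
  · apply e_mod q hqpos
    have h2 : (ZMod.cast ((u : ZMod c)) : ZMod q) = ((π₁ u : (ZMod q)ˣ) : ZMod q) := by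
      simp [π₁, ρ₁]
    have h1 : ((wbar : ℤ) : ZMod q) = ((wq⁻¹ : (ZMod q)ˣ) : ZMod q) := by
      rw [hwbardef]; push_cast; rw [ZMod.natCast_val, ZMod.cast_id]
    push_cast [hval1, ZMod.natCast_val, ZMod.cast_id, ZMod.natCast_self, ZMod.intCast_cast, h1, h2]
    simp only [f, map_inv, mul_inv_rev, inv_inv, Units.val_mul]
    ring
  · apply e_mod w hwpos
    have hq1 : ((q : ℕ) : ZMod w) * ((qbar : ℤ) : ZMod w) = 1 := by
      have := (ZMod.intCast_eq_intCast_iff _ _ _).mpr hqbar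
      push_cast at this
      exact_mod_cast this
    have h3 : (ZMod.cast ((u : ZMod c)) : ZMod w) = ((π₂ u : (ZMod w)ˣ) : ZMod w) := by
      simp [π₂, ρ₂]
    have h4 : (ZMod.cast (((u⁻¹ : (ZMod c)ˣ) : ZMod c)) : ZMod w)
        = (((π₂ u)⁻¹ : (ZMod w)ˣ) : ZMod w) := by
      rw [← map_inv]; simp [π₂, ρ₂]
    push_cast [hval2, ZMod.natCast_val, ZMod.cast_id, ZMod.intCast_cast, h3, h4]
    linear_combination (a : ZMod w) * (((π₂ u)⁻¹ : (ZMod w)ˣ) : ZMod w) * hq1
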